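/- arXiv:0911.4727 — 3 statements merged into one kernel-verified Lean document; each statement's English description precedes it below -/
import Mathlib

section
/- For A ⊆ G(X^N) define the exchangeable natural extension E_ex(A) as the intersection of all coherent and exchangeable sets of gambles on X^N that include A (taken to be G(X^N) when no such set exists). Then the following are equivalent: (i) A avoids non-positivity under exchangeability; (ii) A is included in some coherent and exchangeable set of gambles; (iii) E_ex(A) ≠ G(X^N); (iv) E_ex(A) is a coherent and exchangeable set of gambles; (v) E_ex(A) is the smallest coherent and exchangeable set of gambles that includes A. When these hold, E_ex(A) = posi(W_{A_N} + ({f ∈ G(X^N) : f > 0} ∪ A)) = W_{A_N} + E(A), where E(A) := posi({f ∈ G(X^N) : f > 0} ∪ A) is the natural extension of A. -/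
variable {X : Type*} [Fintype X] [DecidableEq X] [Nonempty X]

/-- `ex^N(f)`: the uniform average of all permuted versions `π^t f` of `f`,
where `(π^t f)(x) = f(x ∘ π)`. -/
noncomputable def exg {X : Type*} (N : ℕ) (f : (Fin N → X) → ℝ) : (Fin N → X) → ℝ :=
  fun x => (∑ π : Equiv.Perm (Fin N), f (x ∘ π)) / (N.factorial : ℝ)

/-- `W_{A_N}`: the linear span of the gambles `f - π^t f`, which is the kernel of
the projection operator `ex^N`. -/
def WA (X : Type*) (N : ℕ) : Set ((Fin N → X) → ℝ) := {f | exg N f = 0}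

/-- A coherent set of desirable gambles on a set of possibilities `Y`. -/
def Coherent {Y : Type*} (D : Set (Y → ℝ)) : Prop :=
  (0 : Y → ℝ) ∉ D ∧ (∀ f : Y → ℝ, 0 ≤ f → f ≠ 0 → f ∈ D) ∧
  (∀ f ∈ D, ∀ c : ℝ, 0 < c → c • f ∈ D) ∧ ∀ f ∈ D, ∀ g ∈ D, f + g ∈ D

/-- A set of desirable gambles on `X^N` is exchangeable if `W_{A_N} + D ⊆ D`. -/
def Exchangeable (X : Type*) (N : ℕ) (D : Set ((Fin N → X) → ℝ)) : Prop :=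
  ∀ f ∈ WA X N, ∀ g ∈ D, f + g ∈ D

/-- The positive hull of a set of gambles: all finite strictly positive linear combinations. -/
def posi {Y : Type*} (A : Set (Y → ℝ)) : Set (Y → ℝ) :=
  {g | ∃ n : ℕ, 0 < n ∧ ∃ (c : Fin n → ℝ) (f : Fin n → Y → ℝ),
    (∀ k, 0 < c k) ∧ (∀ k, f k ∈ A) ∧ g = ∑ k, c k • f k}

open Pointwise

/-- `A` avoids non-positivity under exchangeability: no element of
`posi(({f > 0} ∪ A) + W_{A_N})` is pointwise `≤ 0`. -/
def ANPE (X : Type*) (N : ℕ) (A : Set ((Fin N → X) → ℝ)) : Prop :=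
  ∀ g ∈ posi (({f : (Fin N → X) → ℝ | 0 ≤ f ∧ f ≠ 0} ∪ A) + WA X N), ¬ g ≤ 0

/-- The natural extension of `A`: `posi({f > 0} ∪ A)`. -/
def natex {Y : Type*} (A : Set (Y → ℝ)) : Set (Y → ℝ) :=
  posi ({f : Y → ℝ | 0 ≤ f ∧ f ≠ 0} ∪ A)

/-- The exchangeable natural extension of `A`: the intersection of all coherent and
exchangeable sets of desirable gambles including `A` (the whole space if there are none). -/
def exnatex (X : Type*) (N : ℕ) (A : Set ((Fin N → X) → ℝ)) : Set ((Fin N → X) → ℝ) :=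
  ⋂₀ {D | Coherent D ∧ Exchangeable X N D ∧ A ⊆ D}

/- ### Auxiliary lemmas -/

section Aux
variable {Y : Type*}

lemma mem_posi' {A : Set (Y → ℝ)} {a : Y → ℝ} (ha : a ∈ A) : a ∈ posi A :=
  ⟨1, one_pos, fun _ => 1, fun _ => a, fun _ => one_pos, fun _ => ha, by simp⟩

lemma posi_smul' {A : Set (Y → ℝ)} {g : Y → ℝ} {c : ℝ} (hc : 0 < c) (hg : g ∈ posi A) :
    c • g ∈ posi A := by
  obtain ⟨n, hn, d, f, hd, hf, rfl⟩ := hg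
  exact ⟨n, hn, fun k => c * d k, f, fun k => mul_pos hc (hd k), hf, by
    rw [Finset.smul_sum]; exact Finset.sum_congr rfl fun k _ => (mul_smul c (d k) (f k)).symm⟩

lemma posi_add' {A : Set (Y → ℝ)} {g h : Y → ℝ} (hg : g ∈ posi A) (hh : h ∈ posi A) :
    g + h ∈ posi A := by
  obtain ⟨n, hn, c, f, hc, hf, rfl⟩ := hg
  obtain ⟨m, hm, d, e, hd, he, rfl⟩ := hh
  refine ⟨n + m, by omega, Fin.append c d, Fin.append f e, ?_, ?_, ?_⟩
  · intro k
    induction k using Fin.addCases with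
    | left i => simpa [Fin.append_left] using hc i
    | right i => simpa [Fin.append_right] using hd i
  · intro k
    induction k using Fin.addCases with
    | left i => simpa [Fin.append_left] using hf i
    | right i => simpa [Fin.append_right] using he i
  · rw [Fin.sum_univ_add]
    simp [Fin.append_left, Fin.append_right]

lemma posi_subset' {A D : Set (Y → ℝ)} (hAD : A ⊆ D)
    (hsmul : ∀ f ∈ D, ∀ c : ℝ, 0 < c → c • f ∈ D)
    (hadd : ∀ f ∈ D, ∀ g ∈ D, f + g ∈ D) : posi A ⊆ D := by
  rintro g ⟨n, hn, c, f, hc, hf, rfl⟩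
  have : Nonempty (Fin n) := ⟨⟨0, hn⟩⟩
  exact Finset.sum_induction_nonempty _ (· ∈ D) (fun a b ha hb => hadd a ha b hb)
    Finset.univ_nonempty (fun k _ => hsmul (f k) (hAD (hf k)) (c k) (hc k))

lemma add_mem_posi' {S : Set (Y → ℝ)} {w g : Y → ℝ}
    (hw : ∀ s ∈ S, ∀ c : ℝ, s + c • w ∈ S) (hg : g ∈ posi S) : w + g ∈ posi S := by
  obtain ⟨n, hn, c, f, hc, hf, rfl⟩ := hg
  set k0 : Fin n := ⟨0, hn⟩
  refine ⟨n, hn, c, fun k => f k + (if k = k0 then (c k)⁻¹ else 0) • w,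
    hc, fun k => hw (f k) (hf k) _, ?_⟩
  have key : ∑ k, c k • ((if k = k0 then (c k)⁻¹ else (0:ℝ)) • w) = w := by
    rw [Finset.sum_congr rfl
      (g := fun k => if k = k0 then w else 0) (fun k _ => by
        split_ifs with h
        · rw [smul_smul, mul_inv_cancel₀ (ne_of_gt (hc k)), one_smul]
        · rw [zero_smul, smul_zero])]
    simp
  calc w + ∑ k, c k • f k
      = ∑ k, c k • f k + ∑ k, c k • ((if k = k0 then (c k)⁻¹ else (0:ℝ)) • w) := by
        rw [key, add_comm]
    _ = ∑ k, c k • (f k + (if k = k0 then (c k)⁻¹ else (0:ℝ)) • w) := by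
        rw [← Finset.sum_add_distrib]
        exact Finset.sum_congr rfl fun k _ => (smul_add (c k) _ _).symm

end Aux

section WAAux
variable {X : Type*} {N : ℕ}

lemma WA_zero' : (0 : (Fin N → X) → ℝ) ∈ WA X N := by
  show exg N 0 = 0
  funext x
  simp [exg]

lemma WA_add' {f g : (Fin N → X) → ℝ} (hf : f ∈ WA X N) (hg : g ∈ WA X N) :
    f + g ∈ WA X N := by
  show exg N (f + g) = 0
  funext x
  have hf' := congrFun hf x
  have hg' := congrFun hg x
  simp only [exg, Pi.add_apply, Pi.zero_apply, Finset.sum_add_distrib, add_div] at *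
  rw [hf', hg', add_zero]

lemma WA_smul' {f : (Fin N → X) → ℝ} (c : ℝ) (hf : f ∈ WA X N) : c • f ∈ WA X N := by
  show exg N (c • f) = 0
  funext x
  have hf' := congrFun hf x
  simp only [exg, Pi.smul_apply, Pi.zero_apply, smul_eq_mul, ← Finset.mul_sum] at *
  rw [mul_div_assoc, hf', mul_zero]

end WAAux

theorem exchangeable_natural_extension {N : ℕ} (hN : 1 ≤ N)
    (A : Set ((Fin N → X) → ℝ)) :
    (ANPE X N A ↔
      ∃ D : Set ((Fin N → X) → ℝ), Coherent D ∧ Exchangeable X N D ∧ A ⊆ D) ∧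
    (ANPE X N A ↔ exnatex X N A ≠ Set.univ) ∧
    (ANPE X N A ↔ Coherent (exnatex X N A) ∧ Exchangeable X N (exnatex X N A)) ∧
    (ANPE X N A ↔
      Coherent (exnatex X N A) ∧ Exchangeable X N (exnatex X N A) ∧ A ⊆ exnatex X N A ∧
        ∀ D : Set ((Fin N → X) → ℝ), Coherent D → Exchangeable X N D → A ⊆ D →
          exnatex X N A ⊆ D) ∧
    (ANPE X N A →
      exnatex X N A = posi (WA X N + ({f : (Fin N → X) → ℝ | 0 ≤ f ∧ f ≠ 0} ∪ A)) ∧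
      exnatex X N A = WA X N + natex A) := by
  set P : Set ((Fin N → X) → ℝ) := {f | 0 ≤ f ∧ f ≠ 0} with hP
  set D0 : Set ((Fin N → X) → ℝ) := posi ((P ∪ A) + WA X N) with hD0
  -- membership of `P ∪ A` elements in `D0`
  have hPA0 : P ∪ A ⊆ D0 := fun a ha =>
    mem_posi' (Set.mem_add.mpr ⟨a, ha, 0, WA_zero', add_zero a⟩)
  have hAD0 : A ⊆ D0 := fun a ha => hPA0 (Or.inr ha)
  -- exchangeability of `D0`
  have hexch0 : Exchangeable X N D0 := by
    intro w hw g hg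
    refine add_mem_posi' (fun s hs c => ?_) hg
    obtain ⟨a, ha, b, hb, rfl⟩ := Set.mem_add.mp hs
    exact Set.mem_add.mpr ⟨a, ha, b + c • w, WA_add' hb (WA_smul' c hw), (add_assoc a b _).symm⟩
  -- `D0` is included in any coherent exchangeable superset of `A`
  have hmin : ∀ D : Set ((Fin N → X) → ℝ), Coherent D → Exchangeable X N D → A ⊆ D →
      D0 ⊆ D := by
    intro D hD hDe hDA
    refine posi_subset' ?_ hD.2.2.1 hD.2.2.2
    rintro s hs
    obtain ⟨a, ha, b, hb, rfl⟩ := Set.mem_add.mp hs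
    have haD : a ∈ D := by
      rcases ha with ha | ha
      · exact hD.2.1 a ha.1 ha.2
      · exact hDA ha
    rw [add_comm]
    exact hDe b hb a haD
  -- ANPE gives coherence of `D0`
  have hcoh0 : ANPE X N A → Coherent D0 := by
    intro h
    refine ⟨fun h0 => h 0 h0 le_rfl, fun f hf hf0 => hPA0 (Or.inl ⟨hf, hf0⟩),
      fun f hf c hc => posi_smul' hc hf, fun f hf g hg => posi_add' hf hg⟩
  -- (ii) → (i)
  have hrev : (∃ D : Set ((Fin N → X) → ℝ), Coherent D ∧ Exchangeable X N D ∧ A ⊆ D) →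
      ANPE X N A := by
    rintro ⟨D, hD, hDe, hDA⟩ g hg hgle
    have hgD : g ∈ D := hmin D hD hDe hDA hg
    by_cases hg0 : g = 0
    · exact hD.1 (hg0 ▸ hgD)
    · have hng : -g ∈ D := hD.2.1 (-g) (by simpa using neg_nonneg.mpr hgle) (neg_ne_zero.mpr hg0)
      have : g + -g ∈ D := hD.2.2.2 g hgD (-g) hng
      rw [add_neg_cancel] at this
      exact hD.1 this
  -- ANPE gives `exnatex = D0`
  have heq : ANPE X N A → exnatex X N A = D0 := by
    intro h
    apply Set.Subset.antisymm
    · exact Set.sInter_subset_of_mem ⟨hcoh0 h, hexch0, hAD0⟩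
    · intro x hx
      rw [exnatex, Set.mem_sInter]
      rintro D ⟨hD, hDe, hDA⟩
      exact hmin D hD hDe hDA hx
  -- `D0 = WA + natex A`
  have hWE : D0 = WA X N + natex A := by
    apply Set.Subset.antisymm
    · rintro g ⟨n, hn, c, s, hc, hs, rfl⟩
      choose a ha b hb hab using fun k => Set.mem_add.mp (hs k)
      refine Set.mem_add.mpr ⟨∑ k, c k • b k, ?_, ∑ k, c k • a k, ⟨n, hn, c, a, hc, ha, rfl⟩, ?_⟩
      · exact Finset.sum_induction _ (· ∈ WA X N) (fun x y hx hy => WA_add' hx hy) WA_zero'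
          (fun k _ => WA_smul' (c k) (hb k))
      · rw [← Finset.sum_add_distrib]
        refine Finset.sum_congr rfl fun k _ => ?_
        rw [← smul_add, add_comm (b k) (a k), hab k]
    · rintro g ⟨w, hw, e, he, rfl⟩
      have heD0 : e ∈ D0 := posi_subset' hPA0
        (fun f hf c hc => posi_smul' hc hf) (fun f hf g hg => posi_add' hf hg) he
      exact hexch0 w hw e heD0
  -- (iii) → (i)
  have h3 : exnatex X N A ≠ Set.univ → ANPE X N A := by
    intro hne
    apply hrev
    by_contra hnex
    apply hne
    have hfam : {D | Coherent D ∧ Exchangeable X N D ∧ A ⊆ D} = ∅ :=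
      Set.eq_empty_iff_forall_notMem.mpr fun D hD => hnex ⟨D, hD⟩
    rw [exnatex, hfam, Set.sInter_empty]
  -- (coherence of exnatex) → (i)
  have h4 : Coherent (exnatex X N A) → ANPE X N A := by
    intro hc
    apply h3
    intro hu
    exact hc.1 (hu ▸ Set.mem_univ (0 : (Fin N → X) → ℝ))
  refine ⟨⟨fun h => ⟨D0, hcoh0 h, hexch0, hAD0⟩, hrev⟩, ⟨?_, h3⟩, ⟨?_, fun h => h4 h.1⟩,
    ⟨?_, fun h => h4 h.1⟩, ?_⟩
  · intro h hu
    have h0 : (0 : (Fin N → X) → ℝ) ∈ D0 := (heq h) ▸ hu ▸ Set.mem_univ _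
    exact h 0 h0 le_rfl
  · intro h
    rw [heq h]
    exact ⟨hcoh0 h, hexch0⟩
  · intro h
    rw [heq h]
    exact ⟨hcoh0 h, hexch0, hAD0, fun D hD hDe hDA => hmin D hD hDe hDA⟩
  · intro h
    constructor
    · rw [heq h, hD0, add_comm (WA X N) (P ∪ A)]
    · rw [heq h, hWE]
end

section
/- The collection of coherent and exchangeable sets of gambles on X^N is nonempty, and it has a smallest element (with respect to inclusion), namely D_{X^N} := W_{A_N} + {f ∈ G(X^N) : f > 0}. -/
variable {X : Type*} [Fintype X] [DecidableEq X] [Nonempty X]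

open Pointwise

lemma exg_add {X : Type*} (N : ℕ) (f g : (Fin N → X) → ℝ) :
    exg N (f + g) = exg N f + exg N g := by
  funext x
  simp [exg, Finset.sum_add_distrib, add_div]

lemma exg_smul {X : Type*} (N : ℕ) (c : ℝ) (f : (Fin N → X) → ℝ) :
    exg N (c • f) = c • exg N f := by
  funext x
  simp [exg, ← Finset.mul_sum, mul_div_assoc]

lemma exg_pos_ne_zero {X : Type*} [Nonempty X] {N : ℕ} {p : (Fin N → X) → ℝ}
    (hp : 0 ≤ p) (hp' : p ≠ 0) : exg N p ≠ 0 := by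
  obtain ⟨x, hx⟩ : ∃ x, p x ≠ 0 := by
    by_contra h
    push_neg at h
    exact hp' (funext fun x => h x)
  have hxpos : 0 < p x := lt_of_le_of_ne (hp x) (Ne.symm hx)
  have hsum : (0:ℝ) < ∑ π : Equiv.Perm (Fin N), p (x ∘ π) := by
    have hle : p (x ∘ (1 : Equiv.Perm (Fin N))) ≤ ∑ π : Equiv.Perm (Fin N), p (x ∘ π) :=
      Finset.single_le_sum (f := fun π : Equiv.Perm (Fin N) => p (x ∘ π)) (fun π _ => hp _) (Finset.mem_univ _)
    simpa using lt_of_lt_of_le hxpos hle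
  have : 0 < exg N p x := by
    unfold exg
    exact div_pos hsum (by positivity)
  intro h
  rw [h] at this
  simp at this

lemma exg_zero' {X : Type*} (N : ℕ) : exg N (0 : (Fin N → X) → ℝ) = 0 := by
  funext x; simp [exg]

theorem smallest_coherent_exchangeable {N : ℕ} (hN : 1 ≤ N) :
    {D : Set ((Fin N → X) → ℝ) | Coherent D ∧ Exchangeable X N D}.Nonempty ∧
    IsLeast {D : Set ((Fin N → X) → ℝ) | Coherent D ∧ Exchangeable X N D}
      (WA X N + {f : (Fin N → X) → ℝ | 0 ≤ f ∧ f ≠ 0}) := by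
  set P : Set ((Fin N → X) → ℝ) := {f | 0 ≤ f ∧ f ≠ 0} with hP
  have hmem : ∀ h : (Fin N → X) → ℝ, h ∈ WA X N + P ↔
      ∃ w p, exg N w = 0 ∧ 0 ≤ p ∧ p ≠ 0 ∧ w + p = h := by
    intro h
    constructor
    · rintro ⟨w, hw, p, hp, rfl⟩
      exact ⟨w, p, hw, hp.1, hp.2, rfl⟩
    · rintro ⟨w, p, hw, hp1, hp2, rfl⟩
      exact ⟨w, hw, p, ⟨hp1, hp2⟩, rfl⟩
  have hcoh : Coherent (WA X N + P) := by
    refine ⟨?_, ?_, ?_, ?_⟩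
    · intro h0
      rw [hmem] at h0
      obtain ⟨w, p, hw, hp1, hp2, heq⟩ := h0
      have : exg N (w + p) = 0 := by rw [heq, exg_zero']
      rw [exg_add, hw, zero_add] at this
      exact exg_pos_ne_zero hp1 hp2 this
    · intro f hf hf'
      rw [hmem]
      exact ⟨0, f, exg_zero' N, hf, hf', zero_add f⟩
    · intro f hf c hc
      rw [hmem] at hf ⊢
      obtain ⟨w, p, hw, hp1, hp2, rfl⟩ := hf
      refine ⟨c • w, c • p, ?_, smul_nonneg hc.le hp1, ?_, (smul_add c w p).symm⟩
      · rw [exg_smul, hw, smul_zero]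
      · exact smul_ne_zero hc.ne' hp2
    · intro f hf g hg
      rw [hmem] at hf hg ⊢
      obtain ⟨w1, p1, hw1, hp11, hp12, rfl⟩ := hf
      obtain ⟨w2, p2, hw2, hp21, hp22, rfl⟩ := hg
      refine ⟨w1 + w2, p1 + p2, ?_, add_nonneg hp11 hp21, ?_, by ring⟩
      · rw [exg_add, hw1, hw2, add_zero]
      · intro h
        apply hp12
        funext x
        have h1 : (0:ℝ) ≤ p1 x := hp11 x
        have h2 : (0:ℝ) ≤ p2 x := hp21 x
        have := congrFun h x
        simp only [Pi.add_apply, Pi.zero_apply] at this ⊢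
        linarith
  have hexc : Exchangeable X N (WA X N + P) := by
    intro f hf g hg
    rw [hmem] at hg ⊢
    obtain ⟨w, p, hw, hp1, hp2, rfl⟩ := hg
    refine ⟨f + w, p, ?_, hp1, hp2, by ring⟩
    rw [exg_add, hw, hf, add_zero]
  refine ⟨⟨_, hcoh, hexc⟩, ⟨hcoh, hexc⟩, ?_⟩
  rintro D ⟨hD, hDexc⟩ h hh
  rw [hmem] at hh
  obtain ⟨w, p, hw, hp1, hp2, rfl⟩ := hh
  exact hDexc w hw p (hD.2.1 p hp1 hp2)
end

section
/- A lower prevision P on G(X^N) is coherent and exchangeable (i.e., P = P_D for some coherent and exchangeable set D of gambles on X^N, where P_D(f) := sup{μ ∈ ℝ : f − μ ∈ D}) if and only if there is a coherent lower prevision Q on G(N^N_X) (i.e., Q = P_{D_c} for some coherent set D_c of gambles on N^N_X) such that P = Q ∘ Hy^N. In that case Q is uniquely determined by Q(g) = P(g ∘ T^N) for all gambles g on N^N_X. -/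
variable {X : Type*} [Fintype X] [DecidableEq X] [Nonempty X]

/-- The counting map: `countVec x z` is the number of indices `k` with `x k = z`. -/
def countVec {X : Type*} [Fintype X] [DecidableEq X] {n : ℕ} (x : Fin n → X) : X → ℕ :=
  fun z => (Finset.univ.filter fun k => x k = z).card

lemma sum_countVec {X : Type*} [Fintype X] [DecidableEq X] {n : ℕ} (x : Fin n → X) :
    ∑ z, countVec x z = n := by
  classical
  have h := Finset.card_eq_sum_card_fiberwise
    (s := (Finset.univ : Finset (Fin n))) (t := (Finset.univ : Finset X))
    (f := x) (fun a _ => Finset.mem_univ _)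
  simpa [countVec, Finset.card_fin] using h.symm

/-- `N^N_X`: the set of count vectors, i.e. maps `m : X → ℕ` with `∑ m = N`. -/
abbrev CV (X : Type*) [Fintype X] (N : ℕ) := {m : X → ℕ // ∑ z, m z = N}

/-- The counting map `T^N : X^N → N^N_X`. -/
def Tmap {X : Type*} [Fintype X] [DecidableEq X] {N : ℕ} (x : Fin N → X) : CV X N :=
  ⟨countVec x, sum_countVec x⟩

/-- `Hy^N(f)`: the count gamble `m ↦ (1/|[m]|) ∑_{y ∈ [m]} f(y)`, where
`[m]` is the set of sequences with count vector `m`. -/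
noncomputable def hy {X : Type*} [Fintype X] [DecidableEq X] {N : ℕ}
    (f : (Fin N → X) → ℝ) : CV X N → ℝ :=
  fun m => (∑ y ∈ Finset.univ.filter (fun x : Fin N → X => Tmap x = m), f y) /
    ((Finset.univ.filter (fun x : Fin N → X => Tmap x = m)).card : ℝ)

/-- The lower prevision associated with a set `A` of gambles:
`P_A(f) = sup {μ : f - μ ∈ A}`. -/
noncomputable def lpr {Y : Type*} (A : Set (Y → ℝ)) (f : Y → ℝ) : ℝ :=
  sSup {μ : ℝ | (f - fun _ => μ) ∈ A}

set_option linter.unusedSectionVars false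
set_option linter.unusedVariables false

/-- The natural equivalence between `Fin N` and the sigma type of fibers of `x`. -/
noncomputable def fiberEquiv (x : Fin N → X) :
    Fin N ≃ Σ z : X, Fin (countVec x z) :=
  (Equiv.sigmaFiberEquiv x).symm.trans (Equiv.sigmaCongrRight fun z =>
    Fintype.equivFinOfCardEq (by simp [countVec, Fintype.card_subtype]))

lemma fiberEquiv_fst (x : Fin N → X) (k : Fin N) : ((fiberEquiv x) k).1 = x k := rfl

lemma apply_fiberEquiv_symm (x : Fin N → X) (p : Σ z : X, Fin (countVec x z)) :
    x ((fiberEquiv x).symm p) = p.1 := by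
  conv_lhs => rw [← fiberEquiv_fst x ((fiberEquiv x).symm p)]
  rw [Equiv.apply_symm_apply]

def sigmaFstEquiv {β : X → Type*} (z : X) : {p : Σ a : X, β a // p.1 = z} ≃ β z where
  toFun := fun p => p.2 ▸ p.1.2
  invFun := fun b => ⟨⟨z, b⟩, rfl⟩
  left_inv := by rintro ⟨⟨a, b⟩, rfl⟩; rfl
  right_inv := fun b => rfl

lemma exists_Tmap_eq (m : CV X N) : ∃ x : Fin N → X, Tmap x = m := by
  classical
  have hcard : Fintype.card (Σ z : X, Fin (m.1 z)) = N := by simp [m.2]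
  let e : Fin N ≃ Σ z : X, Fin (m.1 z) := (Fintype.equivFinOfCardEq hcard).symm
  refine ⟨fun k => (e k).1, Subtype.ext (funext fun z => ?_)⟩
  show countVec (fun k => (e k).1) z = m.1 z
  have h1 : countVec (fun k => (e k).1) z = Fintype.card {k : Fin N // (e k).1 = z} := by
    simp [countVec, Fintype.card_subtype]
  rw [h1]
  exact (Fintype.card_congr ((e.subtypeEquiv (q := fun p => p.1 = z)
    fun k => Iff.rfl).trans (sigmaFstEquiv z))).trans (Fintype.card_fin _)

lemma atom_nonempty (m : CV X N) :
    (Finset.univ.filter (fun x : Fin N → X => Tmap x = m)).Nonempty := by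
  obtain ⟨x, hx⟩ := exists_Tmap_eq m
  exact ⟨x, by simp [hx]⟩

lemma atom_card_ne_zero (m : CV X N) :
    ((Finset.univ.filter (fun x : Fin N → X => Tmap x = m)).card : ℝ) ≠ 0 := by
  have := (atom_nonempty m).card_pos
  positivity

lemma countVec_comp_perm (x : Fin N → X) (π : Equiv.Perm (Fin N)) :
    countVec (x ∘ π) = countVec x := by
  funext z
  unfold countVec
  apply Finset.card_bij' (fun k _ => π k) (fun k _ => π.symm k) <;> simp

lemma Tmap_comp_perm (x : Fin N → X) (π : Equiv.Perm (Fin N)) :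
    Tmap (x ∘ π) = Tmap x := Subtype.ext (countVec_comp_perm x π)

lemma exists_perm_of_Tmap_eq {x y : Fin N → X} (h : Tmap x = Tmap y) :
    ∃ π : Equiv.Perm (Fin N), y = x ∘ π := by
  have hc : ∀ z, countVec y z = countVec x z := fun z =>
    (congrFun (congrArg Subtype.val h) z).symm
  refine ⟨(fiberEquiv y).trans ((Equiv.sigmaCongrRight fun z => finCongr (hc z)).trans
    (fiberEquiv x).symm), ?_⟩
  funext k
  show y k = x ((fiberEquiv x).symm ((Equiv.sigmaCongrRight fun z => finCongr (hc z))
    ((fiberEquiv y) k)))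
  rw [apply_fiberEquiv_symm x]
  exact (fiberEquiv_fst y k).symm

lemma exg_eq_hy (f : (Fin N → X) → ℝ) (x : Fin N → X) :
    exg N f x = hy f (Tmap x) := by
  classical
  set A := Finset.univ.filter (fun y : Fin N → X => Tmap y = Tmap x) with hA
  have himg : (Finset.univ : Finset (Equiv.Perm (Fin N))).image (fun π : Equiv.Perm (Fin N) => x ∘ ⇑π) = A := by
    ext y
    simp only [Finset.mem_image, Finset.mem_univ, true_and, hA, Finset.mem_filter]
    constructor
    · rintro ⟨π, rfl⟩; exact Tmap_comp_perm x π
    · intro hy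
      obtain ⟨π, rfl⟩ := exists_perm_of_Tmap_eq hy.symm
      exact ⟨π, rfl⟩
  set c := (Finset.univ.filter (fun π : Equiv.Perm (Fin N) => x ∘ π = x)).card with hc
  have hfib : ∀ y ∈ A, (Finset.univ.filter (fun π : Equiv.Perm (Fin N) => x ∘ π = y)).card = c := by
    intro y hy
    rw [hA, Finset.mem_filter] at hy
    obtain ⟨σ, rfl⟩ := exists_perm_of_Tmap_eq hy.2.symm
    rw [hc]
    apply Finset.card_bij' (fun π _ => π * σ⁻¹) (fun ρ _ => ρ * σ)
    · intro π hπ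
      simp only [Finset.mem_filter, Finset.mem_univ, true_and] at hπ ⊢
      funext k
      have := congrFun hπ (σ⁻¹ k)
      simpa using this
    · intro ρ hρ
      simp only [Finset.mem_filter, Finset.mem_univ, true_and] at hρ ⊢
      funext k
      have := congrFun hρ (σ k)
      simpa using this
    · intro π _; group
    · intro ρ _; group
  have hsum : ∑ π : Equiv.Perm (Fin N), f (x ∘ π) = ∑ y ∈ A, (c : ℝ) * f y := by
    rw [Finset.sum_comp f (fun π : Equiv.Perm (Fin N) => x ∘ ⇑π), himg]
    apply Finset.sum_congr rfl
    intro y hy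
    rw [hfib y hy]
    simp [nsmul_eq_mul]
  have hcard : (N.factorial : ℝ) = (c : ℝ) * A.card := by
    have h1 : (Finset.univ : Finset (Equiv.Perm (Fin N))).card =
        ∑ y ∈ A, (Finset.univ.filter (fun π : Equiv.Perm (Fin N) => x ∘ π = y)).card := by
      apply Finset.card_eq_sum_card_fiberwise
      intro π _
      rw [← himg]
      exact Finset.mem_image_of_mem _ (Finset.mem_univ π)
    have h2 : (Finset.univ : Finset (Equiv.Perm (Fin N))).card = N.factorial := by
      simp [Fintype.card_perm]
    have h3 : N.factorial = A.card * c := by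
      rw [← h2, h1, Finset.sum_congr rfl hfib, Finset.sum_const, smul_eq_mul]
    rw [h3]; push_cast; ring
  have hc0 : (c : ℝ) ≠ 0 := by
    have : (1 : Equiv.Perm (Fin N)) ∈ Finset.univ.filter
        (fun π : Equiv.Perm (Fin N) => x ∘ π = x) := by
      simp
    have := Finset.card_pos.mpr ⟨_, this⟩
    positivity
  show (∑ π : Equiv.Perm (Fin N), f (x ∘ π)) / (N.factorial : ℝ) = _
  rw [hsum, hcard, ← Finset.mul_sum]
  unfold hy
  rw [← hA]
  have hA0 : (A.card : ℝ) ≠ 0 := atom_card_ne_zero (Tmap x)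
  field_simp


lemma hy_sub_const (f : (Fin N → X) → ℝ) (μ : ℝ) :
    hy (f - fun _ => μ) = hy f - fun _ => μ := by
  funext m
  have h0 := atom_card_ne_zero m
  show (∑ y ∈ _, (f y - μ)) / _ = _
  rw [Finset.sum_sub_distrib, Finset.sum_const, sub_div]
  simp only [Pi.sub_apply]
  unfold hy
  congr 1
  rw [nsmul_eq_mul, mul_comm, mul_div_assoc, div_self h0, mul_one]

lemma hy_add (f g : (Fin N → X) → ℝ) : hy (f + g) = hy f + hy g := by
  funext m
  show (∑ y ∈ _, (f y + g y)) / _ = _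
  rw [Finset.sum_add_distrib, add_div]
  rfl

lemma hy_smul (c : ℝ) (f : (Fin N → X) → ℝ) : hy (c • f) = c • hy f := by
  funext m
  show (∑ y ∈ _, c * f y) / _ = _
  rw [← Finset.mul_sum, mul_div_assoc]
  rfl

lemma hy_comp_Tmap (g : CV X N → ℝ) : hy (g ∘ Tmap) = g := by
  funext m
  have h0 := atom_card_ne_zero m
  unfold hy
  rw [Finset.sum_congr rfl (fun y hy => by
    simp only [Finset.mem_filter] at hy
    show g (Tmap y) = g m
    rw [hy.2])]
  rw [Finset.sum_const, nsmul_eq_mul, mul_comm, mul_div_assoc, div_self h0, mul_one]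

lemma hy_nonneg {f : (Fin N → X) → ℝ} (hf : 0 ≤ f) (m : CV X N) : 0 ≤ hy f m := by
  apply div_nonneg _ (by positivity)
  exact Finset.sum_nonneg fun y _ => hf y

lemma hy_ne_zero {f : (Fin N → X) → ℝ} (hf : 0 ≤ f) (hf0 : f ≠ 0) : hy f ≠ 0 := by
  obtain ⟨x, hx⟩ : ∃ x, f x ≠ 0 := by
    by_contra h
    push_neg at h
    exact hf0 (funext h)
  have hx' : 0 < f x := lt_of_le_of_ne (hf x) (Ne.symm hx)
  intro h
  have hm : hy f (Tmap x) = 0 := congrFun h (Tmap x)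
  have hpos : 0 < hy f (Tmap x) := by
    apply div_pos
    · refine lt_of_lt_of_le hx' ?_
      apply Finset.single_le_sum (fun y _ => hf y)
      simp
    · have := (atom_nonempty (Tmap x)).card_pos
      exact_mod_cast this
  rw [hm] at hpos
  exact lt_irrefl _ hpos

lemma hy_of_WA {f : (Fin N → X) → ℝ} (hf : f ∈ WA X N) : hy f = 0 := by
  funext m
  obtain ⟨x, rfl⟩ := exists_Tmap_eq m
  have := congrFun hf x
  rw [← exg_eq_hy]
  exact this

lemma exg_sub (f g : (Fin N → X) → ℝ) : exg N (f - g) = exg N f - exg N g := by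
  funext x
  show (∑ π : Equiv.Perm (Fin N), (f (x ∘ π) - g (x ∘ π))) / _ = _
  rw [Finset.sum_sub_distrib, sub_div]
  rfl

lemma exg_comp_Tmap (g : CV X N → ℝ) : exg N (g ∘ Tmap) = g ∘ Tmap := by
  funext x
  show (∑ π : Equiv.Perm (Fin N), g (Tmap (x ∘ π))) / (N.factorial : ℝ) = g (Tmap x)
  rw [Finset.sum_congr rfl (fun π _ => by rw [Tmap_comp_perm])]
  rw [Finset.sum_const, nsmul_eq_mul]
  have h2 : ((Finset.univ : Finset (Equiv.Perm (Fin N))).card : ℝ) = N.factorial := by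
    simp [Fintype.card_perm]
  rw [h2, mul_comm, mul_div_assoc, div_self (by positivity), mul_one]

lemma exg_eq_hy_comp (f : (Fin N → X) → ℝ) : exg N f = hy f ∘ Tmap :=
  funext fun x => exg_eq_hy f x

lemma sub_exg_mem_WA (f : (Fin N → X) → ℝ) : f - exg N f ∈ WA X N := by
  show exg N (f - exg N f) = 0
  rw [exg_sub]
  rw [exg_eq_hy_comp f, exg_comp_Tmap, sub_self]

lemma exg_sub_mem_WA (f : (Fin N → X) → ℝ) : exg N f - f ∈ WA X N := by
  show exg N (exg N f - f) = 0
  rw [exg_sub]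
  rw [exg_eq_hy_comp f, exg_comp_Tmap, sub_self]

lemma hy_comp_sub_const (f : (Fin N → X) → ℝ) (μ : ℝ) :
    ((hy f - fun _ => μ) ∘ Tmap) = exg N f - fun _ => μ := by
  rw [exg_eq_hy_comp]
  rfl

lemma Tmap_surj_comp_ne_zero {g : CV X N → ℝ} (hg : g ≠ 0) :
    (g ∘ Tmap : (Fin N → X) → ℝ) ≠ 0 := by
  intro h
  apply hg
  funext m
  obtain ⟨x, rfl⟩ := exists_Tmap_eq m
  exact congrFun h x


theorem finite_representation_lower_previsions {N : ℕ} (hN : 1 ≤ N)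
    (P : ((Fin N → X) → ℝ) → ℝ) :
    ((∃ D : Set ((Fin N → X) → ℝ), Coherent D ∧ Exchangeable X N D ∧ P = lpr D) ↔
      ∃ Q : (CV X N → ℝ) → ℝ,
        (∃ Dc : Set (CV X N → ℝ), Coherent Dc ∧ Q = lpr Dc) ∧
        P = fun f => Q (hy f)) ∧
    ∀ Q : (CV X N → ℝ) → ℝ,
      (∃ Dc : Set (CV X N → ℝ), Coherent Dc ∧ Q = lpr Dc) →
      P = (fun f => Q (hy f)) →
      Q = fun g => P (g ∘ Tmap) := by
  constructor
  · constructor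
    · rintro ⟨D, hD, hEx, rfl⟩
      obtain ⟨hD0, hDpos, hDsmul, hDadd⟩ := hD
      set Dc : Set (CV X N → ℝ) := {g | (g ∘ Tmap : (Fin N → X) → ℝ) ∈ D} with hDc
      have hDcCoh : Coherent Dc := by
        refine ⟨hD0, ?_, ?_, ?_⟩
        · intro g hg hg0
          exact hDpos _ (fun x => hg (Tmap x)) (Tmap_surj_comp_ne_zero hg0)
        · intro g hg c hc
          exact hDsmul _ hg c hc
        · intro g hg g' hg'
          exact hDadd _ hg _ hg'
      refine ⟨lpr Dc, ⟨Dc, hDcCoh, rfl⟩, ?_⟩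
      funext f
      show lpr D f = lpr Dc (hy f)
      unfold lpr
      congr 1
      ext μ
      show (f - fun _ => μ) ∈ D ↔ ((hy f - fun _ => μ) ∘ Tmap : (Fin N → X) → ℝ) ∈ D
      rw [hy_comp_sub_const]
      constructor
      · intro h
        have := hEx _ (exg_sub_mem_WA f) _ h
        rwa [sub_add_sub_cancel] at this
      · intro h
        have := hEx _ (sub_exg_mem_WA f) _ h
        rwa [sub_add_sub_cancel] at this
    · rintro ⟨Q, ⟨Dc, hDc, rfl⟩, rfl⟩
      obtain ⟨hD0, hDpos, hDsmul, hDadd⟩ := hDc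
      set D : Set ((Fin N → X) → ℝ) := {f | hy f ∈ Dc} with hDdef
      have hDCoh : Coherent D := by
        refine ⟨?_, ?_, ?_, ?_⟩
        · show hy (0 : (Fin N → X) → ℝ) ∉ Dc
          have : hy (0 : (Fin N → X) → ℝ) = 0 := by
            funext m; simp [hy]
          rw [this]; exact hD0
        · intro f hf hf0
          exact hDpos _ (hy_nonneg hf) (hy_ne_zero hf hf0)
        · intro f hf c hc
          show hy (c • f) ∈ Dc
          rw [hy_smul]
          exact hDsmul _ hf c hc
        · intro f hf g hg
          show hy (f + g) ∈ Dc
          rw [hy_add]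
          exact hDadd _ hf _ hg
      have hDEx : Exchangeable X N D := by
        intro f hf g hg
        show hy (f + g) ∈ Dc
        rw [hy_add, hy_of_WA hf, zero_add]
        exact hg
      refine ⟨D, hDCoh, hDEx, ?_⟩
      funext f
      show lpr Dc (hy f) = lpr D f
      unfold lpr
      congr 1
      ext μ
      show (hy f - fun _ => μ) ∈ Dc ↔ hy (f - fun _ => μ) ∈ Dc
      rw [hy_sub_const]
  · intro Q hQ hP
    obtain ⟨Dc, hDc, rfl⟩ := hQ
    funext g
    have := congrFun hP (g ∘ Tmap)
    rw [this, hy_comp_Tmap]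
end
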